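/- Let t0 < t1 be real numbers and let z : ℝ → ℝ be continuously differentiable on [t0,t1]. Then z is strictly quasi-concave on [t0,t1] if and only if: (i) there do not exist t < t' in [t0,t1] with z'(t) < 0 and z'(t') > 0; and (ii) z' does not vanish identically on any nondegenerate subinterval of [t0,t1]. -/

import Mathlib

open Set Filter Topology

/-- If the derivative within `Icc a b` at `t` is negative and `t < b`,
there is a point to the right with a smaller value. -/
lemma aux_right (a b t : ℝ) (z : ℝ → ℝ) (d : ℝ)
    (h : HasDerivWithinAt z d (Set.Icc a b) t) (hat : a ≤ t) (htb : t < b) (hd : d < 0) :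
    ∃ s ∈ Set.Ioc t b, z s < z t := by
  have h' : HasDerivWithinAt z d (Set.Icc t b) t := h.mono (Set.Icc_subset_Icc hat le_rfl)
  rw [hasDerivWithinAt_iff_tendsto_slope] at h'
  rw [Set.Icc_diff_left] at h'
  have hne : (𝓝[Set.Ioc t b] t).NeBot := left_nhdsWithin_Ioc_neBot htb
  have hev : ∀ᶠ s in 𝓝[Set.Ioc t b] t, slope z t s < 0 := h'.eventually_lt_const hd
  obtain ⟨s, hmem, hs⟩ := (eventually_mem_nhdsWithin.and hev).exists
  refine ⟨s, hmem, ?_⟩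
  rw [slope_def_field] at hs
  have hst : 0 < s - t := sub_pos.2 hmem.1
  rcases div_neg_iff.mp hs with ⟨_, h2⟩ | ⟨h1, _⟩
  · linarith
  · linarith

/-- If the derivative within `Icc a b` at `t` is positive and `a < t`,
there is a point to the left with a smaller value. -/
lemma aux_left (a b t : ℝ) (z : ℝ → ℝ) (d : ℝ)
    (h : HasDerivWithinAt z d (Set.Icc a b) t) (hat : a < t) (htb : t ≤ b) (hd : 0 < d) :
    ∃ s ∈ Set.Ico a t, z s < z t := by
  have h' : HasDerivWithinAt z d (Set.Icc a t) t := h.mono (Set.Icc_subset_Icc le_rfl htb)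
  rw [hasDerivWithinAt_iff_tendsto_slope] at h'
  rw [Set.Icc_sdiff_right] at h'
  have hne : (𝓝[Set.Ico a t] t).NeBot := right_nhdsWithin_Ico_neBot hat
  have hev : ∀ᶠ s in 𝓝[Set.Ico a t] t, 0 < slope z t s := h'.eventually_const_lt hd
  obtain ⟨s, hmem, hs⟩ := (eventually_mem_nhdsWithin.and hev).exists
  refine ⟨s, hmem, ?_⟩
  rw [slope_def_field] at hs
  have hst : s - t < 0 := sub_neg.2 hmem.2
  rcases div_pos_iff.mp hs with ⟨_, h2⟩ | ⟨h1, _⟩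
  · linarith
  · linarith

/-- **Proposition 11.** A continuously differentiable function z on [t0,t1] is strictly
quasi-concave there if and only if (i) its derivative is never negative at a point and
positive at a later point, and (ii) its derivative does not vanish identically on any
nondegenerate subinterval. -/
theorem stmt19 (t0 t1 : ℝ) (ht : t0 < t1) (z zd : ℝ → ℝ)
    (hderiv : ∀ t ∈ Set.Icc t0 t1, HasDerivWithinAt z (zd t) (Set.Icc t0 t1) t)
    (hcont : ContinuousOn zd (Set.Icc t0 t1)) :
    (∀ x ∈ Set.Icc t0 t1, ∀ y ∈ Set.Icc t0 t1, x ≠ y → ∀ s ∈ Set.Ioo (0 : ℝ) 1,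
        min (z x) (z y) < z (s * x + (1 - s) * y)) ↔
      ((¬ ∃ t ∈ Set.Icc t0 t1, ∃ t' ∈ Set.Icc t0 t1,
          t < t' ∧ zd t < 0 ∧ 0 < zd t') ∧
       (¬ ∃ u v : ℝ, t0 ≤ u ∧ u < v ∧ v ≤ t1 ∧ ∀ s ∈ Set.Icc u v, zd s = 0)) := by
  have hzc : ContinuousOn z (Set.Icc t0 t1) := fun t ht' => (hderiv t ht').continuousWithinAt
  constructor
  · intro hsqc
    constructor
    · rintro ⟨t, htm, t', htm', htt', hneg, hpos⟩
      -- minimum of z on [t, t']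
      have hsub : Set.Icc t t' ⊆ Set.Icc t0 t1 := Set.Icc_subset_Icc htm.1 htm'.2
      obtain ⟨m, hm, hmin⟩ := (isCompact_Icc).exists_isMinOn
        (Set.nonempty_Icc.2 htt'.le) (hzc.mono hsub)
      obtain ⟨sr, hsr, hsrlt⟩ := aux_right t t' t z (zd t)
        ((hderiv t htm).mono hsub) le_rfl htt' hneg
      obtain ⟨sl, hsl, hsllt⟩ := aux_left t t' t' z (zd t')
        ((hderiv t' htm').mono hsub) htt' le_rfl hpos
      have hmt : t < m := by
        rcases lt_or_eq_of_le hm.1 with h | h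
        · exact h
        · exfalso
          have := hmin (Set.Ioc_subset_Icc_self hsr)
          simp only [← h] at this
          exact absurd this (not_le.2 hsrlt)
      have hmt' : m < t' := by
        rcases lt_or_eq_of_le hm.2 with h | h
        · exact h
        · exfalso
          have := hmin (Set.Ico_subset_Icc_self hsl)
          simp only [h] at this
          exact absurd this (not_le.2 hsllt)
      set σ : ℝ := (t' - m) / (t' - t) with hσ
      have htt'0 : (0:ℝ) < t' - t := by linarith
      have hσ0 : 0 < σ := div_pos (by linarith) htt'0
      have hσ1 : σ < 1 := by
        rw [div_lt_one htt'0]; linarith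
      have hmeq : σ * t + (1 - σ) * t' = m := by
        rw [hσ]
        field_simp [hσ]
        ring
      have := hsqc t htm t' htm' (ne_of_lt htt') σ ⟨hσ0, hσ1⟩
      rw [hmeq] at this
      have h1 : z m ≤ z t := hmin (Set.left_mem_Icc.2 htt'.le)
      have h2 : z m ≤ z t' := hmin (Set.right_mem_Icc.2 htt'.le)
      rcases min_cases (z t) (z t') with ⟨he, _⟩ | ⟨he, _⟩ <;> rw [he] at this <;> linarith
    · rintro ⟨u, v, hu, huv, hv, hzero⟩
      have hsub : Set.Icc u v ⊆ Set.Icc t0 t1 := Set.Icc_subset_Icc hu hv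
      -- z is constant on [u, v]
      have hconst : ∀ w ∈ Set.Icc u v, z w = z u := by
        intro w hw
        have := Convex.norm_image_sub_le_of_norm_hasDerivWithin_le
          (f := z) (f' := zd) (s := Set.Icc u v) (C := 0)
          (fun x hx => (hderiv x (hsub hx)).mono hsub)
          (fun x hx => by simp [hzero x hx]) (convex_Icc u v)
          (Set.left_mem_Icc.2 huv.le) hw
        simpa [sub_eq_zero] using this
      have hu' : u ∈ Set.Icc t0 t1 := ⟨hu, le_trans huv.le hv⟩
      have hv' : v ∈ Set.Icc t0 t1 := ⟨le_trans hu huv.le, hv⟩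
      have hmid : (1/2 : ℝ) * u + (1 - 1/2) * v ∈ Set.Icc u v := by
        constructor <;> [nlinarith; nlinarith]
      have := hsqc u hu' v hv' (ne_of_lt huv) (1/2) (by norm_num)
      rw [hconst _ hmid] at this
      have hzv : z v = z u := hconst v (Set.right_mem_Icc.2 huv.le)
      rw [hzv, min_self] at this
      exact lt_irrefl _ this
  · rintro ⟨hi, hii⟩ x hx y hy hxy s hs
    -- key claim: no interior minimizer
    have key : ∀ a b : ℝ, a ∈ Set.Icc t0 t1 → b ∈ Set.Icc t0 t1 → a < b →
        ∀ m ∈ Set.Ioo a b, (∀ w ∈ Set.Icc a b, z m ≤ z w) → False := by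
      intro a b ha hb hab m hm hmin
      have hsub : Set.Icc a b ⊆ Set.Icc t0 t1 := Set.Icc_subset_Icc ha.1 hb.2
      have hIooSub : Set.Ioo a b ⊆ Set.Ioo t0 t1 := Set.Ioo_subset_Ioo ha.1 hb.2
      have hDerivAt : ∀ w ∈ Set.Ioo a b, HasDerivAt z (zd w) w := by
        intro w hw
        have hw' := hIooSub hw
        exact (hderiv w (hsub (Set.Ioo_subset_Icc_self hw))).hasDerivAt
          (mem_of_superset (Ioo_mem_nhds hw'.1 hw'.2) Set.Ioo_subset_Icc_self)
      -- left claim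
      have left : (∃ t ∈ Set.Ico a m, zd t < 0) ∨ (∀ t ∈ Set.Ioo a m, zd t = 0) := by
        by_cases hc : ∀ p ∈ Set.Icc a m, z p = z m
        · right
          intro t htm
          have hconst : z =ᶠ[𝓝 t] (fun _ => z m) := by
            filter_upwards [Ioo_mem_nhds htm.1 htm.2] with w hw
            exact hc w (Set.Ioo_subset_Icc_self hw)
          have h1 : HasDerivAt (fun _ : ℝ => z m) (zd t) t :=
            (hDerivAt t ⟨htm.1, lt_trans htm.2 hm.2⟩).congr_of_eventuallyEq hconst.symm
          have h2 : HasDerivAt (fun _ : ℝ => z m) 0 t := hasDerivAt_const t (z m)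
          exact h1.unique h2
        · left
          push_neg at hc
          obtain ⟨p, hp, hpne⟩ := hc
          have hpm : p < m := lt_of_le_of_ne hp.2 (by
            intro h; exact hpne (by rw [h]))
          have hpgt : z m < z p :=
            lt_of_le_of_ne (hmin p ⟨hp.1, le_trans hp.2 hm.2.le⟩) (Ne.symm hpne)
          obtain ⟨c, hc, hceq⟩ := exists_hasDerivAt_eq_slope z zd hpm
            ((hzc.mono hsub).mono (Set.Icc_subset_Icc hp.1 hm.2.le))
            (fun w hw => hDerivAt w ⟨lt_of_le_of_lt hp.1 hw.1, lt_trans hw.2 hm.2⟩)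
          refine ⟨c, ⟨le_of_lt (lt_of_le_of_lt hp.1 hc.1), hc.2⟩, ?_⟩
          rw [hceq]
          apply div_neg_of_neg_of_pos <;> linarith
      -- right claim
      have right : (∃ t ∈ Set.Ioc m b, 0 < zd t) ∨ (∀ t ∈ Set.Ioo m b, zd t = 0) := by
        by_cases hc : ∀ p ∈ Set.Icc m b, z p = z m
        · right
          intro t htm
          have hconst : z =ᶠ[𝓝 t] (fun _ => z m) := by
            filter_upwards [Ioo_mem_nhds htm.1 htm.2] with w hw
            exact hc w (Set.Ioo_subset_Icc_self hw)
          have h1 : HasDerivAt (fun _ : ℝ => z m) (zd t) t :=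
            (hDerivAt t ⟨lt_trans hm.1 htm.1, htm.2⟩).congr_of_eventuallyEq hconst.symm
          have h2 : HasDerivAt (fun _ : ℝ => z m) 0 t := hasDerivAt_const t (z m)
          exact h1.unique h2
        · left
          push_neg at hc
          obtain ⟨p, hp, hpne⟩ := hc
          have hpm : m < p := lt_of_le_of_ne hp.1 (by
            intro h; exact hpne (by rw [← h]))
          have hpgt : z m < z p :=
            lt_of_le_of_ne (hmin p ⟨le_trans hm.1.le hp.1, hp.2⟩) (Ne.symm hpne)
          obtain ⟨c, hc, hceq⟩ := exists_hasDerivAt_eq_slope z zd hpm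
            ((hzc.mono hsub).mono (Set.Icc_subset_Icc hm.1.le hp.2))
            (fun w hw => hDerivAt w ⟨lt_trans hm.1 hw.1, lt_of_lt_of_le hw.2 hp.2⟩)
          refine ⟨c, ⟨hc.1, le_of_lt (lt_of_lt_of_le hc.2 hp.2)⟩, ?_⟩
          rw [hceq]
          apply div_pos <;> linarith
      rcases left with ⟨t, htm, htneg⟩ | hlz
      · rcases right with ⟨t', htm', htpos⟩ | hrz
        · exact hi ⟨t, ⟨le_trans ha.1 htm.1, le_trans htm.2.le (le_trans hm.2.le hb.2)⟩,
            t', ⟨le_trans ha.1 (le_trans hm.1.le htm'.1.le), le_trans htm'.2 hb.2⟩,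
            lt_trans htm.2 htm'.1, htneg, htpos⟩
        · -- zd vanishes on Ioo m b
          refine hii ⟨m + (b - m)/3, m + 2*(b - m)/3, ?_, by linarith [hm.1, hm.2, ha.1, hb.2], ?_, ?_⟩
          · have := hm.1; have := ha.1; linarith
          · have := hb.2; linarith [hm.2]
          · intro w hw
            exact hrz w ⟨by rcases hw with ⟨h1, h2⟩; nlinarith [hm.2], by rcases hw with ⟨h1, h2⟩; nlinarith [hm.2]⟩
      · refine hii ⟨a + (m - a)/3, a + 2*(m - a)/3, ?_, by linarith [hm.1], ?_, ?_⟩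
        · have := ha.1; linarith [hm.1]
        · have := hb.2; linarith [hm.1, hm.2]
        · intro w hw
          exact hlz w ⟨by rcases hw with ⟨h1, h2⟩; nlinarith [hm.1], by rcases hw with ⟨h1, h2⟩; nlinarith [hm.1]⟩
    -- reduce to x < y
    have main : ∀ a b : ℝ, a ∈ Set.Icc t0 t1 → b ∈ Set.Icc t0 t1 → a < b →
        ∀ c ∈ Set.Ioo a b, min (z a) (z b) < z c := by
      intro a b ha hb hab c hc
      by_contra hle
      push_neg at hle
      have hsub : Set.Icc a b ⊆ Set.Icc t0 t1 := Set.Icc_subset_Icc ha.1 hb.2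
      obtain ⟨m0, hm0, hmin0⟩ := (isCompact_Icc).exists_isMinOn
        (Set.nonempty_Icc.2 hab.le) (hzc.mono hsub)
      by_cases hin : m0 ∈ Set.Ioo a b
      · exact key a b ha hb hab m0 hin (fun w hw => hmin0 hw)
      · -- m0 is an endpoint; then c is also a minimizer
        have hzm0 : z m0 ≥ min (z a) (z b) := by
          rcases hm0.1.eq_or_lt with h | h
          · rw [← h]; exact min_le_left _ _
          · rcases hm0.2.eq_or_lt with h' | h'
            · rw [h']; exact min_le_right _ _
            · exact absurd ⟨h, h'⟩ hin
        have hcmin : ∀ w ∈ Set.Icc a b, z c ≤ z w := by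
          intro w hw
          calc z c ≤ min (z a) (z b) := hle
          _ ≤ z m0 := hzm0
          _ ≤ z w := hmin0 hw
        exact key a b ha hb hab c hc hcmin
    rcases lt_or_gt_of_ne hxy with h | h
    · have hc : s * x + (1 - s) * y ∈ Set.Ioo x y := by
        constructor <;> nlinarith [hs.1, hs.2]
      exact main x y hx hy h _ hc
    · have hc : s * x + (1 - s) * y ∈ Set.Ioo y x := by
        constructor <;> nlinarith [hs.1, hs.2]
      rw [min_comm]
      exact main y x hy hx h _ hc
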